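/- arXiv:math/0603215 — 3 statements merged into one kernel-verified Lean document; each statement's English description precedes it below -/
import Mathlib

section
/- Let N ≥ 2 be an integer, A : ℤ/Nℤ → {0,1} a particle configuration with B_i := 1 − A_i, and let φ_a, φ_b : ℝ → ℝ be 1-periodic functions with ψ := φ_a − φ_b. Define Z(A) := exp((1/N) Σ_{i∈ℤ/Nℤ} [φ_a(i/N) A_i + φ_b(i/N) B_i]), and for i ∈ ℤ/Nℤ let σ_iA be the configuration obtained from A by exchanging the values at sites i and i+1. Then Σ_{i∈ℤ/Nℤ} [λ_ab(N) A_i B_{i+1} + λ_ba(N) B_i A_{i+1}] (Z(σ_iA) − Z(A)) = L^N(A) · Z(A), where L^N(A) := Σ_{i∈ℤ/Nℤ} [λ̃_ab(i,N) A_i B_{i+1} + λ̃_ba(i,N) B_i A_{i+1}]. -/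
/-- For the ASEP on the discrete torus `ℤ/Nℤ` (`N ≥ 2`), with
particle configuration `A` (values in `{0,1}`), holes `B i = 1 - A i`, 1-periodic
functions `φa, φb`, `ψ = φa - φb`, the exponential functional
`Z(A) = exp((1/N) Σᵢ [φa(i/N) Aᵢ + φb(i/N) Bᵢ])`, and the exchange maps `σᵢ`,
one has `Σᵢ [λ_ab Aᵢ Bᵢ₊₁ + λ_ba Bᵢ Aᵢ₊₁] (Z(σᵢA) - Z(A)) = L^N(A) · Z(A)` where
`L^N(A) = Σᵢ [λ̃_ab(i,N) Aᵢ Bᵢ₊₁ + λ̃_ba(i,N) Bᵢ Aᵢ₊₁]`. -/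
theorem stmt_0 (N : ℕ) [NeZero N] (hN : 2 ≤ N)
    (φa φb : ℝ → ℝ) (hφa : Function.Periodic φa 1) (hφb : Function.Periodic φb 1)
    (ψ : ℝ → ℝ) (hψ : ψ = φa - φb)
    (lab lba : ℝ) (hlab : 0 < lab) (hlba : 0 < lba)
    (A : ZMod N → ℝ) (hA : ∀ i, A i = 0 ∨ A i = 1)
    (B : ZMod N → ℝ) (hB : ∀ i, B i = 1 - A i)
    (Z : (ZMod N → ℝ) → ℝ)
    (hZ : ∀ C : ZMod N → ℝ,
      Z C = Real.exp ((1 / (N : ℝ)) *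
        ∑ i : ZMod N, (φa ((i.val : ℝ) / N) * C i + φb ((i.val : ℝ) / N) * (1 - C i))))
    (σ : ZMod N → (ZMod N → ℝ) → ZMod N → ℝ)
    (hσ : ∀ i C j, σ i C j = if j = i then C (i + 1) else if j = i + 1 then C i else C j)
    (dψ : ZMod N → ℝ)
    (hdψ : ∀ i : ZMod N, dψ i = ψ (((i.val : ℝ) + 1) / N) - ψ ((i.val : ℝ) / N))
    (ltab ltba : ZMod N → ℝ)
    (hltab : ∀ i, ltab i = lab * (Real.exp (dψ i / N) - 1))
    (hltba : ∀ i, ltba i = lba * (Real.exp (-dψ i / N) - 1)) :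
    ∑ i : ZMod N, (lab * A i * B (i + 1) + lba * B i * A (i + 1)) * (Z (σ i A) - Z A)
      = (∑ i : ZMod N, (ltab i * A i * B (i + 1) + ltba i * B i * A (i + 1))) * Z A := by

  haveI : Fact (1 < N) := ⟨hN⟩
  have hψper : Function.Periodic ψ 1 := by
    subst hψ; exact hφa.sub hφb
  have hshift : ∀ (φ : ℝ → ℝ), Function.Periodic φ 1 → ∀ i : ZMod N,
      φ ((((i + 1 : ZMod N)).val : ℝ) / N) = φ (((i.val : ℝ) + 1) / N) := by
    intro φ hφ i
    have hv : ((i + 1 : ZMod N)).val = (i.val + 1) % N := by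
      rw [ZMod.val_add, ZMod.val_one]
    rcases lt_or_eq_of_le (Nat.succ_le_of_lt (ZMod.val_lt i)) with h | h
    · rw [hv, Nat.mod_eq_of_lt h]
      push_cast
      ring_nf
    · have h' : i.val + 1 = N := h
      have h0 : ((i + 1 : ZMod N)).val = 0 := by rw [hv, h', Nat.mod_self]
      rw [h0]
      have hN0 : (N : ℝ) ≠ 0 := by positivity
      have hr : ((i.val : ℝ) + 1) / N = 1 := by
        rw [div_eq_one_iff_eq hN0]
        exact_mod_cast h'
      rw [hr]
      have := hφ 0
      simpa using this.symm
  have hne : ∀ i : ZMod N, i ≠ i + 1 := by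
    intro i
    exact left_ne_add.mpr one_ne_zero
  have hZσ : ∀ i : ZMod N, Z (σ i A) = Z A * Real.exp ((A i - A (i + 1)) * dψ i / N) := by
    intro i
    rw [hZ, hZ, ← Real.exp_add]
    congr 1
    have hdiff : ∑ j : ZMod N,
        ((φa ((j.val : ℝ) / N) * σ i A j + φb ((j.val : ℝ) / N) * (1 - σ i A j))
          - (φa ((j.val : ℝ) / N) * A j + φb ((j.val : ℝ) / N) * (1 - A j)))
        = (A i - A (i + 1)) * dψ i := by
      rw [Fintype.sum_eq_add i (i + 1) (hne i) ?_]
      · have e1 : σ i A i = A (i + 1) := by rw [hσ]; simp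
        have e2 : σ i A (i + 1) = A i := by
          rw [hσ, if_neg (hne i).symm, if_pos rfl]
        rw [e1, e2, hshift φa hφa i, hshift φb hφb i, hdψ i, hψ]
        simp only [Pi.sub_apply]
        ring
      · intro k hk
        rw [hσ]
        rw [if_neg hk.1, if_neg hk.2]
        ring
    have hsum : ∑ j : ZMod N,
        (φa ((j.val : ℝ) / N) * σ i A j + φb ((j.val : ℝ) / N) * (1 - σ i A j))
        = (∑ j : ZMod N, (φa ((j.val : ℝ) / N) * A j + φb ((j.val : ℝ) / N) * (1 - A j)))
          + (A i - A (i + 1)) * dψ i := by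
      rw [← hdiff, Finset.sum_sub_distrib]
      ring
    rw [hsum]
    have hN0 : (N : ℝ) ≠ 0 := by positivity
    field_simp
  rw [Finset.sum_mul]
  refine Finset.sum_congr rfl ?_
  intro i _
  rw [hZσ i, hB, hB, hltab, hltba]
  have h1exp : Real.exp ((1 - 0) * dψ i / N) = Real.exp (dψ i / N) := by ring_nf
  have h2exp : Real.exp ((0 - 1) * dψ i / N) = Real.exp (-dψ i / N) := by ring_nf
  rcases hA i with h1 | h1 <;> rcases hA (i + 1) with h2 | h2 <;> rw [h1, h2]
  · ring_nf
  · rw [h2exp]; ring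
  · rw [h1exp]; ring
  · ring_nf
end

section
/- Under the scaling assumption λ(N) = λN² + o(N²) and μ(N) = μN + o(N) with λ, μ > 0 fixed constants, there exists a constant C > 0 (depending only on ψ and on the rate sequences) such that for every integer N ≥ 2 and every particle configuration A : ℤ/Nℤ → {0,1}, |L^N(A)| ≤ C. -/
/-- A continuous 1-periodic function is globally bounded. -/
lemma aux_bound_of_periodic {f : ℝ → ℝ} (hc : Continuous f) (hp : Function.Periodic f 1) :
    ∃ K : ℝ, 0 ≤ K ∧ ∀ x, |f x| ≤ K := by
  obtain ⟨C, hC⟩ := (isCompact_Icc (a := (0:ℝ)) (b := 1)).exists_bound_of_continuousOn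
    hc.continuousOn
  refine ⟨max C 0, le_max_right _ _, fun x => ?_⟩
  have h1 : f x = f (Int.fract x) := by
    have := hp.sub_int_mul_eq (x := x) ⌊x⌋
    simp only [mul_one] at this
    rw [Int.fract]
    exact this.symm
  rw [h1]
  have h2 : Int.fract x ∈ Set.Icc (0:ℝ) 1 :=
    ⟨Int.fract_nonneg x, (Int.fract_lt_one x).le⟩
  exact le_trans (hC _ h2) (le_max_left _ _)

/-- Global Lipschitz bound from a global derivative bound. -/
lemma aux_lipschitz {f : ℝ → ℝ} (hf : Differentiable ℝ f) {K : ℝ}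
    (hK : ∀ t, |deriv f t| ≤ K) (x y : ℝ) : |f x - f y| ≤ K * |x - y| := by
  have := Convex.norm_image_sub_le_of_norm_deriv_le (s := Set.univ)
    (fun t _ => hf t) (fun t _ => hK t) convex_univ (Set.mem_univ y) (Set.mem_univ x)
  simpa [Real.norm_eq_abs] using this

lemma aux_abs_exp_sub_one_le (x : ℝ) : |Real.exp x - 1| ≤ |x| * Real.exp |x| := by
  rcases le_or_gt 0 x with hx | hx
  · rw [abs_of_nonneg hx, abs_of_nonneg (by linarith [Real.one_le_exp hx])]
    have hmul : Real.exp (-x) * Real.exp x = 1 := by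
      rw [← Real.exp_add]; simp
    nlinarith [Real.add_one_le_exp (-x), Real.exp_pos x, Real.exp_pos (-x), hmul]
  · rw [abs_of_neg hx, abs_of_nonpos (by linarith [Real.exp_lt_one_iff.mpr hx] : Real.exp x - 1 ≤ 0)]
    nlinarith [Real.add_one_le_exp x, Real.one_le_exp (by linarith : (0:ℝ) ≤ -x)]

lemma aux_abs_exp_sub_one_sub_le (x : ℝ) : |Real.exp x - 1 - x| ≤ x ^ 2 * Real.exp |x| := by
  set f : ℝ → ℝ := fun t => Real.exp t - 1 - t with hfdef
  have hf : Differentiable ℝ f := by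
    simpa [hfdef] using (Real.differentiable_exp.sub_const 1).sub differentiable_id
  have hderiv : ∀ t, deriv f t = Real.exp t - 1 := by
    intro t
    have h1 : HasDerivAt f (Real.exp t - 1) t := by
      exact ((Real.hasDerivAt_exp t).sub_const 1).sub (hasDerivAt_id t)
    exact h1.deriv
  have key := Convex.norm_image_sub_le_of_norm_deriv_le (s := Set.Icc (-|x|) |x|)
    (f := f) (C := |x| * Real.exp |x|)
    (fun t _ => hf t)
    (fun t ht => by
      rw [hderiv t, Real.norm_eq_abs]
      calc |Real.exp t - 1| ≤ |t| * Real.exp |t| := aux_abs_exp_sub_one_le t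
        _ ≤ |x| * Real.exp |x| := by
            have h1 : |t| ≤ |x| := abs_le.mpr ⟨ht.1, ht.2⟩
            exact mul_le_mul h1 (Real.exp_le_exp.mpr h1) (Real.exp_pos _).le (abs_nonneg _))
    (convex_Icc _ _)
    ⟨neg_nonpos.mpr (abs_nonneg x), abs_nonneg x⟩
    ⟨neg_abs_le x, le_abs_self x⟩
  have hf0 : f 0 = 0 := by simp [hfdef]
  rw [hf0, sub_zero, sub_zero, Real.norm_eq_abs, Real.norm_eq_abs] at key
  calc |f x| ≤ |x| * Real.exp |x| * |x| := key
    _ = x ^ 2 * Real.exp |x| := by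
        rw [show |x| * Real.exp |x| * |x| = |x| ^ 2 * Real.exp |x| by ring, sq_abs]

/-- Second-difference bound from a Lipschitz bound on the derivative. -/
lemma aux_seconddiff {ψ : ℝ → ℝ} (hd : Differentiable ℝ ψ) {K : ℝ}
    (hK : ∀ x y, |deriv ψ x - deriv ψ y| ≤ K * |x - y|) (h u v : ℝ) :
    |(ψ (u + h) - ψ u) - (ψ (v + h) - ψ v)| ≤ K * |h| * |u - v| := by
  set g : ℝ → ℝ := fun t => ψ (t + h) - ψ t with hgdef
  have hg : Differentiable ℝ g := (hd.comp (differentiable_id.add_const h)).sub hd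
  have hgderiv : ∀ t, deriv g t = deriv ψ (t + h) - deriv ψ t := by
    intro t
    have h1 : HasDerivAt g (deriv ψ (t + h) - deriv ψ t) t := by
      have h2 : HasDerivAt (fun s => ψ (s + h)) (deriv ψ (t + h)) t := by
        have h3 := (HasDerivAt.comp t ((hd (t + h)).hasDerivAt)
          ((hasDerivAt_id t).add_const h))
        rw [mul_one] at h3
        exact h3
      exact h2.sub (hd t).hasDerivAt
    exact h1.deriv
  have hb : ∀ t, |deriv g t| ≤ K * |h| := by
    intro t
    rw [hgderiv t]
    calc |deriv ψ (t + h) - deriv ψ t| ≤ K * |t + h - t| := hK _ _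
      _ = K * |h| := by ring_nf
  have := aux_lipschitz hg hb u v
  simpa [hgdef] using this

set_option maxHeartbeats 1000000 in
/-- Under the scaling `λ(N) = λN² + o(N²)`, `μ(N) = μN + o(N)`
(with `λ(N) = (λ_ab(N)+λ_ba(N))/2`, `μ(N) = λ_ab(N) - λ_ba(N)` and `λ, μ > 0` fixed),
there is a constant `C > 0` such that for every `N ≥ 2` and every particle
configuration `A : ℤ/Nℤ → {0,1}`, `|L^N(A)| ≤ C`, where
`L^N(A) = Σᵢ [λ̃_ab(i,N) Aᵢ Bᵢ₊₁ + λ̃_ba(i,N) Bᵢ Aᵢ₊₁]`,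
`λ̃_ab(i,N) = λ_ab(N)(exp(Δψ(i/N)/N) - 1)`, `λ̃_ba(i,N) = λ_ba(N)(exp(-Δψ(i/N)/N) - 1)`,
`Δψ(i/N) = ψ((i+1)/N) - ψ(i/N)` and `ψ` is 1-periodic and C². -/
theorem stmt_1 (ψ : ℝ → ℝ) (hper : Function.Periodic ψ 1) (hsm : ContDiff ℝ 2 ψ)
    (lab lba : ℕ → ℝ) (hlab : ∀ N, 0 < lab N) (hlba : ∀ N, 0 < lba N)
    (lam mu : ℝ) (hlam : 0 < lam) (hmu : 0 < mu)
    (hscale1 : (fun N : ℕ => (lab N + lba N) / 2 - lam * (N : ℝ) ^ 2) =o[Filter.atTop]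
      fun N : ℕ => (N : ℝ) ^ 2)
    (hscale2 : (fun N : ℕ => (lab N - lba N) - mu * (N : ℝ)) =o[Filter.atTop]
      fun N : ℕ => (N : ℝ)) :
    ∃ C > 0, ∀ N : ℕ, 2 ≤ N → ∀ [NeZero N], ∀ A : ZMod N → ℝ, (∀ i, A i = 0 ∨ A i = 1) →
      |∑ i : ZMod N,
          (lab N * (Real.exp ((ψ (((i.val : ℝ) + 1) / N) - ψ ((i.val : ℝ) / N)) / N) - 1)
              * A i * (1 - A (i + 1))
            + lba N * (Real.exp (-(ψ (((i.val : ℝ) + 1) / N) - ψ ((i.val : ℝ) / N)) / N) - 1)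
              * (1 - A i) * A (i + 1))| ≤ C := by
  -- smoothness data
  have hsm' : ContDiff ℝ (1 + 1 : ℕ) ψ := by exact_mod_cast hsm
  have hd1 : Differentiable ℝ ψ := hsm'.differentiable (by norm_num)
  have hcd1 : ContDiff ℝ 1 (deriv ψ) := by
    have := (contDiff_succ_iff_deriv (n := 1)).mp (by exact_mod_cast hsm')
    exact this.2.2
  have hd2 : Differentiable ℝ (deriv ψ) := hcd1.differentiable one_ne_zero
  have hcont2 : Continuous (deriv (deriv ψ)) := (contDiff_one_iff_deriv.mp hcd1).2
  -- derivatives are periodic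
  have hperd : Function.Periodic (deriv ψ) 1 := by
    intro x
    have h1 : (fun t => ψ (t + 1)) = ψ := funext hper
    have := deriv_comp_add_const ψ 1 x
    rw [h1] at this
    exact this.symm
  have hperdd : Function.Periodic (deriv (deriv ψ)) 1 := by
    intro x
    have h1 : (fun t => deriv ψ (t + 1)) = deriv ψ := funext hperd
    have := deriv_comp_add_const (deriv ψ) 1 x
    rw [h1] at this
    exact this.symm
  -- global bounds on the derivatives
  obtain ⟨K₁, hK₁0, hK₁⟩ := aux_bound_of_periodic hcd1.continuous hperd
  obtain ⟨K₂, hK₂0, hK₂⟩ := aux_bound_of_periodic hcont2 hperdd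
  have lip1 : ∀ x y, |ψ x - ψ y| ≤ K₁ * |x - y| := aux_lipschitz hd1 hK₁
  have lip2 : ∀ x y, |deriv ψ x - deriv ψ y| ≤ K₂ * |x - y| := aux_lipschitz hd2 hK₂
  -- global bounds on the rate sequences
  have t1 : Filter.Tendsto
      (fun N : ℕ => |((lab N + lba N) / 2 - lam * (N : ℝ) ^ 2) / (N : ℝ) ^ 2|)
      Filter.atTop (nhds 0) := by
    have := hscale1.tendsto_div_nhds_zero
    simpa using this.abs
  obtain ⟨c₁, hc₁⟩ := t1.bddAbove_range
  have hc₁' : ∀ N : ℕ, |((lab N + lba N) / 2 - lam * (N : ℝ) ^ 2) / (N : ℝ) ^ 2| ≤ c₁ :=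
    fun N => hc₁ (Set.mem_range_self N)
  have hc₁0 : 0 ≤ c₁ := le_trans (abs_nonneg _) (hc₁' 0)
  have t2 : Filter.Tendsto
      (fun N : ℕ => |((lab N - lba N) - mu * (N : ℝ)) / (N : ℝ)|)
      Filter.atTop (nhds 0) := by
    have := hscale2.tendsto_div_nhds_zero
    simpa using this.abs
  obtain ⟨c₂, hc₂⟩ := t2.bddAbove_range
  have hc₂' : ∀ N : ℕ, |((lab N - lba N) - mu * (N : ℝ)) / (N : ℝ)| ≤ c₂ :=
    fun N => hc₂ (Set.mem_range_self N)
  have hc₂0 : 0 ≤ c₂ := le_trans (abs_nonneg _) (hc₂' 0)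
  set P : ℝ := 2 * (lam + c₁) with hPdef
  set Q : ℝ := mu + c₂ with hQdef
  have hP0 : 0 < P := by positivity
  have hQ0 : 0 < Q := by positivity
  set E : ℝ := Real.exp K₁ with hEdef
  have hE1 : 1 ≤ E := Real.one_le_exp hK₁0
  refine ⟨P * K₁ ^ 2 * E + 2 * Q * K₁ + P * K₂ / 2 + 1, by positivity, ?_⟩
  intro N hN _ A hA
  have hA01 : ∀ i, 0 ≤ A i ∧ A i ≤ 1 := by
    intro i; rcases hA i with h | h <;> rw [h] <;> norm_num
  have hNR : (0 : ℝ) < N := by positivity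
  have hNR1 : (1 : ℝ) ≤ N := by exact_mod_cast Nat.one_le_of_lt hN
  -- rate bounds for this N
  have hsum_rate : lab N + lba N ≤ P * (N : ℝ) ^ 2 := by
    have h1 : |((lab N + lba N) / 2 - lam * (N : ℝ) ^ 2)| ≤ c₁ * (N : ℝ) ^ 2 := by
      have := hc₁' N
      rw [abs_div, abs_of_pos (by positivity : (0:ℝ) < (N:ℝ)^2),
        div_le_iff₀ (by positivity : (0:ℝ) < (N:ℝ)^2)] at this
      linarith
    have h2 := abs_le.mp h1
    rw [hPdef]; nlinarith [h2.2]
  have hdiff_rate : |lab N - lba N| ≤ Q * (N : ℝ) := by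
    have h1 : |((lab N - lba N) - mu * (N : ℝ))| ≤ c₂ * (N : ℝ) := by
      have := hc₂' N
      rw [abs_div, abs_of_pos hNR, div_le_iff₀ hNR] at this
      linarith
    have h2 := abs_le.mp h1
    rw [abs_le, hQdef]
    constructor <;> nlinarith [h2.1, h2.2, hmu.le, hNR1]
  -- the one-step increment
  set x : ZMod N → ℝ := fun i => (ψ (((i.val : ℝ) + 1) / N) - ψ ((i.val : ℝ) / N)) / N
    with hxdef
  have harg : ∀ u : ℝ, (u + 1) / (N : ℝ) = u / N + 1 / N := by
    intro u; field_simp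
  have hxle : ∀ i, |x i| ≤ K₁ / (N : ℝ) ^ 2 := by
    intro i
    rw [hxdef]
    simp only
    have h1 : |ψ (((i.val : ℝ) + 1) / N) - ψ ((i.val : ℝ) / N)| ≤ K₁ / N := by
      have h2 := lip1 (((i.val : ℝ) + 1) / N) ((i.val : ℝ) / N)
      have harg2 : ((i.val : ℝ) + 1) / N - (i.val : ℝ) / N = 1 / N := by field_simp; ring
      rw [harg2, abs_of_pos (by positivity : (0:ℝ) < 1 / (N:ℝ))] at h2
      calc |ψ (((i.val : ℝ) + 1) / N) - ψ ((i.val : ℝ) / N)| ≤ K₁ * (1 / N) := h2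
        _ = K₁ / N := by ring
    rw [abs_div, abs_of_pos hNR]
    calc |ψ (((i.val : ℝ) + 1) / N) - ψ ((i.val : ℝ) / N)| / N ≤ (K₁ / N) / N := by gcongr
      _ = K₁ / (N:ℝ)^2 := by rw [div_div, ← pow_two]
  have hsqN : (1:ℝ) ≤ (N:ℝ) ^ 2 := by nlinarith [hNR1]
  have hxK₁ : ∀ i, |x i| ≤ K₁ := fun i =>
    le_trans (hxle i) (by
      rw [div_le_iff₀ (by positivity)]
      nlinarith [hsqN, hK₁0])
  -- the function g and its periodicity
  set g : ℝ → ℝ := fun t => ψ (t + 1 / N) - ψ t with hgdef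
  have hgp : Function.Periodic g 1 := by
    intro t
    rw [hgdef]
    simp only
    rw [show t + 1 + 1 / (N:ℝ) = (t + 1 / N) + 1 by ring, hper (t + 1/N), hper t]
  have hxg : ∀ i : ZMod N, x i = g ((i.val : ℝ) / N) / N := by
    intro i
    rw [hxdef, hgdef]
    simp only
    rw [harg (i.val : ℝ)]
  -- second difference bound
  have hsecond : ∀ i : ZMod N, |x i - x (i - 1)| ≤ K₂ / (N : ℝ) ^ 3 := by
    intro i
    -- relate the value of (i-1).val to i.val - 1 modulo N
    have hzm : (((((i - 1).val : ℤ) - ((i.val : ℤ) - 1)) : ℤ) : ZMod N) = 0 := by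
      push_cast
      simp [ZMod.natCast_val, ZMod.cast_id]
    obtain ⟨k, hk⟩ := (ZMod.intCast_zmod_eq_zero_iff_dvd _ N).mp hzm
    have hkR : (((i - 1).val : ℝ)) = ((i.val : ℝ) - 1) + (k : ℝ) * N := by
      have h5 : (((i - 1).val : ℤ)) = ((i.val : ℤ) - 1) + (N : ℤ) * k := by linarith [hk]
      have h6 := congrArg (fun z : ℤ => (z : ℝ)) h5
      push_cast at h6
      linarith [h6]
    have hx1 : x (i - 1) = g (((i.val : ℝ) - 1) / N) / N := by
      rw [hxg (i - 1), hkR]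
      congr 1
      have : (((i.val : ℝ) - 1) + (k : ℝ) * N) / N = ((i.val : ℝ) - 1) / N + k := by
        field_simp
      rw [this]
      have := (hgp.int_mul k) (((i.val : ℝ) - 1) / N)
      simpa [mul_one] using this
    rw [hxg i, hx1, div_sub_div_same, abs_div, abs_of_pos hNR]
    have hgd : |g ((i.val : ℝ) / N) - g (((i.val : ℝ) - 1) / N)| ≤ K₂ / (N:ℝ)^2 := by
      have := aux_seconddiff hd1 lip2 (1 / N) ((i.val : ℝ) / N) (((i.val : ℝ) - 1) / N)
      rw [hgdef]
      simp only
      have habs : |(i.val : ℝ) / N - ((i.val : ℝ) - 1) / N| = 1 / N := by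
        rw [div_sub_div_same, show (i.val:ℝ) - ((i.val:ℝ) - 1) = 1 by ring]
        exact abs_of_pos (by positivity)
      rw [habs, abs_of_pos (by positivity : (0:ℝ) < 1 / (N:ℝ))] at this
      calc |(ψ ((i.val:ℝ)/N + 1/N) - ψ ((i.val:ℝ)/N)) -
              (ψ (((i.val:ℝ) - 1)/N + 1/N) - ψ (((i.val:ℝ) - 1)/N))| ≤ K₂ * (1/N) * (1/N) :=
            this
        _ = K₂ / (N:ℝ)^2 := by rw [pow_two]; field_simp
    rw [div_le_div_iff₀ hNR (by positivity)]
    calc |g ((i.val : ℝ) / N) - g (((i.val : ℝ) - 1) / N)| * (N:ℝ)^3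
        ≤ (K₂ / (N:ℝ)^2) * (N:ℝ)^3 := mul_le_mul_of_nonneg_right hgd (by positivity)
      _ = K₂ * (N:ℝ) := by field_simp
  -- decompose the summand
  set F : ZMod N → ℝ := fun i =>
    lab N * (Real.exp (x i) - 1 - x i) * A i * (1 - A (i + 1))
      + lba N * (Real.exp (-x i) - 1 - (-x i)) * (1 - A i) * A (i + 1) with hFdef
  set G : ZMod N → ℝ := fun i =>
    x i * ((lab N - lba N) / 2) * (A i * (1 - A (i + 1)) + (1 - A i) * A (i + 1)) with hGdef
  set H : ZMod N → ℝ := fun i =>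
    ((lab N + lba N) / 2) * (x i * A i - x i * A (i + 1)) with hHdef
  have hdecomp : ∀ i : ZMod N,
      (lab N * (Real.exp ((ψ (((i.val : ℝ) + 1) / N) - ψ ((i.val : ℝ) / N)) / N) - 1)
          * A i * (1 - A (i + 1))
        + lba N * (Real.exp (-(ψ (((i.val : ℝ) + 1) / N) - ψ ((i.val : ℝ) / N)) / N) - 1)
          * (1 - A i) * A (i + 1)) = F i + G i + H i := by
    intro i
    have e1 : (ψ (((i.val : ℝ) + 1) / N) - ψ ((i.val : ℝ) / N)) / N = x i := rfl
    have e2 : -(ψ (((i.val : ℝ) + 1) / N) - ψ ((i.val : ℝ) / N)) / N = -x i := by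
      rw [← e1]; ring
    rw [e1, e2, hFdef, hGdef, hHdef]
    ring
  rw [Finset.sum_congr rfl (fun i _ => hdecomp i), Finset.sum_add_distrib,
    Finset.sum_add_distrib]
  -- cardinality
  have hcard : (Finset.univ : Finset (ZMod N)).card = N := by
    rw [Finset.card_univ, ZMod.card]
  -- bound on F
  have hFbound : ∀ i : ZMod N, |F i| ≤ P * K₁ ^ 2 * E / (N : ℝ) ^ 2 := by
    intro i
    rw [hFdef]
    have hx2 : (x i) ^ 2 ≤ (K₁ / (N:ℝ)^2) ^ 2 := by
      rw [← sq_abs]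
      exact pow_le_pow_left₀ (abs_nonneg _) (hxle i) 2
    have hexp : Real.exp |x i| ≤ E := Real.exp_le_exp.mpr (hxK₁ i)
    have hexp' : Real.exp |(-x i)| ≤ E := by rw [abs_neg]; exact hexp
    have h1 : |Real.exp (x i) - 1 - x i| ≤ (K₁ / (N:ℝ)^2) ^ 2 * E :=
      le_trans (aux_abs_exp_sub_one_sub_le (x i))
        (mul_le_mul hx2 hexp (Real.exp_pos _).le (by positivity))
    have h2 : |Real.exp (-x i) - 1 - (-x i)| ≤ (K₁ / (N:ℝ)^2) ^ 2 * E := by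
      have h3 := aux_abs_exp_sub_one_sub_le (-x i)
      rw [show (-x i)^2 = (x i)^2 by ring, abs_neg] at h3
      exact le_trans h3 (mul_le_mul hx2 hexp (Real.exp_pos _).le (by positivity))
    have hAi := hA01 i
    have hAi1 := hA01 (i + 1)
    have hb1 : |A i * (1 - A (i+1))| ≤ 1 := by
      rw [abs_mul]
      have hu : |A i| ≤ 1 := abs_le.mpr ⟨by linarith [hAi.1], hAi.2⟩
      have hv : |1 - A (i+1)| ≤ 1 := abs_le.mpr ⟨by linarith [hAi1.2], by linarith [hAi1.1]⟩
      calc |A i| * |1 - A (i+1)| ≤ 1 * 1 :=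
            mul_le_mul hu hv (abs_nonneg _) zero_le_one
        _ = 1 := mul_one 1
    have hb2 : |(1 - A i) * A (i+1)| ≤ 1 := by
      rw [abs_mul]
      have hu : |1 - A i| ≤ 1 := abs_le.mpr ⟨by linarith [hAi.2], by linarith [hAi.1]⟩
      have hv : |A (i+1)| ≤ 1 := abs_le.mpr ⟨by linarith [hAi1.1], hAi1.2⟩
      calc |1 - A i| * |A (i+1)| ≤ 1 * 1 :=
            mul_le_mul hu hv (abs_nonneg _) zero_le_one
        _ = 1 := mul_one 1
    calc |lab N * (Real.exp (x i) - 1 - x i) * A i * (1 - A (i + 1))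
          + lba N * (Real.exp (-x i) - 1 - (-x i)) * (1 - A i) * A (i + 1)|
        ≤ |lab N * (Real.exp (x i) - 1 - x i) * A i * (1 - A (i + 1))|
          + |lba N * (Real.exp (-x i) - 1 - (-x i)) * (1 - A i) * A (i + 1)| := abs_add_le _ _
      _ ≤ lab N * ((K₁ / (N:ℝ)^2) ^ 2 * E) * 1
          + lba N * ((K₁ / (N:ℝ)^2) ^ 2 * E) * 1 := by
          have e1 : |lab N * (Real.exp (x i) - 1 - x i) * A i * (1 - A (i + 1))|
              = lab N * |Real.exp (x i) - 1 - x i| * |A i * (1 - A (i+1))| := by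
            rw [show lab N * (Real.exp (x i) - 1 - x i) * A i * (1 - A (i + 1))
                = (lab N * (Real.exp (x i) - 1 - x i)) * (A i * (1 - A (i+1))) by ring,
              abs_mul, abs_mul, abs_of_pos (hlab N)]
          have e2 : |lba N * (Real.exp (-x i) - 1 - (-x i)) * (1 - A i) * A (i + 1)|
              = lba N * |Real.exp (-x i) - 1 - (-x i)| * |(1 - A i) * A (i+1)| := by
            rw [show lba N * (Real.exp (-x i) - 1 - (-x i)) * (1 - A i) * A (i + 1)
                = (lba N * (Real.exp (-x i) - 1 - (-x i))) * ((1 - A i) * A (i+1)) by ring,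
              abs_mul, abs_mul, abs_of_pos (hlba N)]
          rw [e1, e2]
          refine add_le_add ?_ ?_
          · exact mul_le_mul (mul_le_mul_of_nonneg_left h1 (hlab N).le) hb1
              (abs_nonneg _) (mul_nonneg (hlab N).le (by positivity))
          · exact mul_le_mul (mul_le_mul_of_nonneg_left h2 (hlba N).le) hb2
              (abs_nonneg _) (mul_nonneg (hlba N).le (by positivity))
      _ = (lab N + lba N) * ((K₁ / (N:ℝ)^2) ^ 2 * E) := by ring
      _ ≤ (P * (N:ℝ)^2) * ((K₁ / (N:ℝ)^2) ^ 2 * E) := by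
          exact mul_le_mul_of_nonneg_right hsum_rate (by positivity)
      _ = P * K₁ ^ 2 * E / (N:ℝ)^2 := by
          rw [div_pow]
          field_simp
  have hFsum : |∑ i : ZMod N, F i| ≤ P * K₁ ^ 2 * E := by
    calc |∑ i : ZMod N, F i| ≤ ∑ i : ZMod N, |F i| := Finset.abs_sum_le_sum_abs _ _
      _ ≤ (Finset.univ : Finset (ZMod N)).card • (P * K₁ ^ 2 * E / (N:ℝ)^2) :=
          Finset.sum_le_card_nsmul _ _ _ (fun i _ => hFbound i)
      _ = (N : ℝ) * (P * K₁ ^ 2 * E / (N:ℝ)^2) := by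
          rw [hcard, nsmul_eq_mul]
      _ ≤ P * K₁ ^ 2 * E := by
          have hPK : 0 ≤ P * K₁ ^ 2 * E := by positivity
          have hNN : (N:ℝ) ≤ (N:ℝ)^2 := by nlinarith [hNR1]
          rw [mul_div_assoc' ((N:ℝ)) _ _, div_le_iff₀ (by positivity : (0:ℝ) < (N:ℝ)^2)]
          nlinarith [hPK, hNN]
  -- bound on G
  have hGbound : ∀ i : ZMod N, |G i| ≤ Q * K₁ / (N : ℝ) := by
    intro i
    rw [hGdef]
    have hAi := hA01 i
    have hAi1 := hA01 (i + 1)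
    have hw : |A i * (1 - A (i + 1)) + (1 - A i) * A (i + 1)| ≤ 2 := by
      rw [abs_le]
      constructor <;> nlinarith [hAi.1, hAi.2, hAi1.1, hAi1.2]
    have habs2 : |(lab N - lba N) / 2| ≤ Q * (N:ℝ) / 2 := by
      rw [abs_div, abs_of_pos (by norm_num : (0:ℝ) < 2)]
      exact (div_le_div_iff_of_pos_right (by norm_num : (0:ℝ) < 2)).mpr hdiff_rate
    calc |x i * ((lab N - lba N) / 2) * (A i * (1 - A (i + 1)) + (1 - A i) * A (i + 1))|
        = |x i| * |(lab N - lba N) / 2| * |A i * (1 - A (i + 1)) + (1 - A i) * A (i + 1)| := by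
          rw [abs_mul, abs_mul]
      _ ≤ (K₁ / (N:ℝ)^2) * (Q * (N:ℝ) / 2) * 2 := by
          exact mul_le_mul (mul_le_mul (hxle i) habs2 (abs_nonneg _) (by positivity)) hw
            (abs_nonneg _) (by positivity)
      _ = Q * K₁ / (N:ℝ) := by field_simp
  have hGsum : |∑ i : ZMod N, G i| ≤ Q * K₁ := by
    calc |∑ i : ZMod N, G i| ≤ ∑ i : ZMod N, |G i| := Finset.abs_sum_le_sum_abs _ _
      _ ≤ (Finset.univ : Finset (ZMod N)).card • (Q * K₁ / (N:ℝ)) :=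
          Finset.sum_le_card_nsmul _ _ _ (fun i _ => hGbound i)
      _ = (N : ℝ) * (Q * K₁ / (N:ℝ)) := by rw [hcard, nsmul_eq_mul]
      _ = Q * K₁ := by field_simp
  -- bound on H via Abel summation
  have hreindex : ∑ i : ZMod N, x i * A (i + 1) = ∑ i : ZMod N, x (i - 1) * A i := by
    exact Fintype.sum_equiv (Equiv.addRight (1 : ZMod N))
      (fun i => x i * A (i + 1)) (fun j => x (j - 1) * A j)
      (fun i => by simp)
  have hHsum : |∑ i : ZMod N, H i| ≤ P * K₂ / 2 := by
    have hHrw : ∑ i : ZMod N, H i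
        = ((lab N + lba N) / 2) * ∑ i : ZMod N, (x i - x (i - 1)) * A i := by
      rw [hHdef]
      rw [← Finset.mul_sum]
      congr 1
      rw [Finset.sum_sub_distrib, hreindex, ← Finset.sum_sub_distrib]
      congr 1
      funext i
      ring
    rw [hHrw, abs_mul]
    have hinner : |∑ i : ZMod N, (x i - x (i - 1)) * A i| ≤ (N:ℝ) * (K₂ / (N:ℝ)^3) := by
      calc |∑ i : ZMod N, (x i - x (i - 1)) * A i|
          ≤ ∑ i : ZMod N, |(x i - x (i - 1)) * A i| := Finset.abs_sum_le_sum_abs _ _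
        _ ≤ (Finset.univ : Finset (ZMod N)).card • (K₂ / (N:ℝ)^3) := by
            refine Finset.sum_le_card_nsmul _ _ _ (fun i _ => ?_)
            rw [abs_mul]
            calc |x i - x (i - 1)| * |A i| ≤ (K₂ / (N:ℝ)^3) * 1 := by
                  exact mul_le_mul (hsecond i)
                    (abs_le.mpr ⟨by linarith [(hA01 i).1], (hA01 i).2⟩)
                    (abs_nonneg _) (by positivity)
              _ = K₂ / (N:ℝ)^3 := by ring
        _ = (N : ℝ) * (K₂ / (N:ℝ)^3) := by rw [hcard, nsmul_eq_mul]
    have houter : |(lab N + lba N) / 2| ≤ P * (N:ℝ)^2 / 2 := by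
      rw [abs_div, abs_two, abs_of_pos (by linarith [hlab N, hlba N] : 0 < lab N + lba N)]
      linarith [hsum_rate]
    calc |(lab N + lba N) / 2| * |∑ i : ZMod N, (x i - x (i - 1)) * A i|
        ≤ (P * (N:ℝ)^2 / 2) * ((N:ℝ) * (K₂ / (N:ℝ)^3)) := by
          exact mul_le_mul houter hinner (abs_nonneg _) (by positivity)
      _ = P * K₂ / 2 := by field_simp
  calc |∑ i : ZMod N, F i + ∑ i : ZMod N, G i + ∑ i : ZMod N, H i|
      ≤ |∑ i : ZMod N, F i| + |∑ i : ZMod N, G i| + |∑ i : ZMod N, H i| :=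
        (abs_add_le _ _).trans (by gcongr; exact abs_add_le _ _)
    _ ≤ P * K₁ ^ 2 * E + Q * K₁ + P * K₂ / 2 :=
        add_le_add (add_le_add hFsum hGsum) hHsum
    _ ≤ P * K₁ ^ 2 * E + 2 * Q * K₁ + P * K₂ / 2 + 1 := by
        nlinarith [hQ0.le, hK₁0]
end

section
/- Let N ≥ 2 be an integer, A : ℤ/Nℤ → {0,1} a particle configuration with B_i := 1 − A_i, and let φ_a, φ_b : ℝ → ℝ be 1-periodic functions with ψ := φ_a − φ_b. Define Z(A) := exp((1/N) Σ_{i∈ℤ/Nℤ} [φ_a(i/N) A_i + φ_b(i/N) B_i]), and for i ∈ ℤ/Nℤ let σ_iA be the configuration obtained from A by exchanging the values at sites i and i+1. Then Σ_{i∈ℤ/Nℤ} [λ_ab(N) A_i B_{i+1} + λ_ba(N) B_i A_{i+1}] (Z(σ_iA) − Z(A))² = Z(A)² · R^N(A), where R^N(A) := Σ_{i∈ℤ/Nℤ} [ (λ̃_ab(i,N)²/λ_ab(N)) A_i B_{i+1} + (λ̃_ba(i,N)²/λ_ba(N)) B_i A_{i+1} ]. -/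
/-- With the notation of the ASEP exchange dynamics,
`Σᵢ [λ_ab Aᵢ Bᵢ₊₁ + λ_ba Bᵢ Aᵢ₊₁] (Z(σᵢA) - Z(A))² = Z(A)² · R^N(A)`, where
`R^N(A) = Σᵢ [(λ̃_ab(i,N)²/λ_ab(N)) Aᵢ Bᵢ₊₁ + (λ̃_ba(i,N)²/λ_ba(N)) Bᵢ Aᵢ₊₁]`. -/
theorem stmt_3 (N : ℕ) [NeZero N] (hN : 2 ≤ N)
    (φa φb : ℝ → ℝ) (hφa : Function.Periodic φa 1) (hφb : Function.Periodic φb 1)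
    (ψ : ℝ → ℝ) (hψ : ψ = φa - φb)
    (lab lba : ℝ) (hlab : 0 < lab) (hlba : 0 < lba)
    (A : ZMod N → ℝ) (hA : ∀ i, A i = 0 ∨ A i = 1)
    (B : ZMod N → ℝ) (hB : ∀ i, B i = 1 - A i)
    (Z : (ZMod N → ℝ) → ℝ)
    (hZ : ∀ C : ZMod N → ℝ,
      Z C = Real.exp ((1 / (N : ℝ)) *
        ∑ i : ZMod N, (φa ((i.val : ℝ) / N) * C i + φb ((i.val : ℝ) / N) * (1 - C i))))
    (σ : ZMod N → (ZMod N → ℝ) → ZMod N → ℝ)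
    (hσ : ∀ i C j, σ i C j = if j = i then C (i + 1) else if j = i + 1 then C i else C j)
    (dψ : ZMod N → ℝ)
    (hdψ : ∀ i : ZMod N, dψ i = ψ (((i.val : ℝ) + 1) / N) - ψ ((i.val : ℝ) / N))
    (ltab ltba : ZMod N → ℝ)
    (hltab : ∀ i, ltab i = lab * (Real.exp (dψ i / N) - 1))
    (hltba : ∀ i, ltba i = lba * (Real.exp (-dψ i / N) - 1)) :
    ∑ i : ZMod N, (lab * A i * B (i + 1) + lba * B i * A (i + 1)) * (Z (σ i A) - Z A) ^ 2
      = Z A ^ 2 *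
        ∑ i : ZMod N, (ltab i ^ 2 / lab * A i * B (i + 1) + ltba i ^ 2 / lba * B i * A (i + 1)) := by
  haveI : Fact (1 < N) := ⟨hN⟩
  have hNne : (N : ℝ) ≠ 0 := by positivity
  have hne : ∀ i : ZMod N, i ≠ i + 1 := by
    intro i h
    have : (1 : ZMod N) = 0 := (left_eq_add.mp h)
    exact one_ne_zero this
  -- periodic wrap lemma
  have hval : ∀ (f : ℝ → ℝ), Function.Periodic f 1 → ∀ i : ZMod N,
      f ((((i + 1 : ZMod N)).val : ℝ) / N) = f (((i.val : ℝ) + 1) / N) := by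
    intro f hf i
    have hv : (i + 1 : ZMod N).val = (i.val + 1) % N := by
      rw [ZMod.val_add, ZMod.val_one]
    rcases lt_or_ge (i.val + 1) N with h | h
    · rw [hv, Nat.mod_eq_of_lt h]
      push_cast
      ring_nf
    · have hiv : i.val + 1 = N := le_antisymm (Nat.succ_le_of_lt (ZMod.val_lt i)) h
      have hv0 : (i + 1 : ZMod N).val = 0 := by rw [hv, hiv, Nat.mod_self]
      rw [hv0]
      have : ((i.val : ℝ) + 1) / N = 0 + 1 := by
        rw [show ((i.val : ℝ) + 1) = (N : ℝ) by exact_mod_cast congrArg (Nat.cast (R := ℝ)) hiv]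
        field_simp
        norm_num
      rw [this, hf 0]
      norm_num
  -- key formula for Z (σ i A)
  have key : ∀ i : ZMod N, Z (σ i A) = Z A * Real.exp ((A i - A (i + 1)) * dψ i / N) := by
    intro i
    rw [hZ, hZ, ← Real.exp_add]
    congr 1
    have hsub : ∀ j : ZMod N, j ∉ ({i, i + 1} : Finset (ZMod N)) →
        (φa ((j.val : ℝ) / N) * σ i A j + φb ((j.val : ℝ) / N) * (1 - σ i A j))
        - (φa ((j.val : ℝ) / N) * A j + φb ((j.val : ℝ) / N) * (1 - A j)) = 0 := by
      intro j hj
      simp only [Finset.mem_insert, Finset.mem_singleton, not_or] at hj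
      rw [hσ, if_neg hj.1, if_neg hj.2]
      ring
    have hdiff :
        (∑ j : ZMod N, (φa ((j.val : ℝ) / N) * σ i A j + φb ((j.val : ℝ) / N) * (1 - σ i A j)))
        - (∑ j : ZMod N, (φa ((j.val : ℝ) / N) * A j + φb ((j.val : ℝ) / N) * (1 - A j)))
        = (A i - A (i + 1)) * dψ i := by
      rw [← Finset.sum_sub_distrib]
      rw [← Finset.sum_subset (Finset.subset_univ ({i, i + 1} : Finset (ZMod N)))
        (fun j _ hj => hsub j hj)]
      rw [Finset.sum_pair (hne i)]
      rw [hσ, if_pos rfl, hσ, if_neg (Ne.symm (hne i)), if_pos rfl]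
      rw [hval φa hφa i, hval φb hφb i, hdψ i, hψ]
      simp only [Pi.sub_apply]
      ring
    have : (1 / (N : ℝ)) *
        (∑ j : ZMod N, (φa ((j.val : ℝ) / N) * σ i A j + φb ((j.val : ℝ) / N) * (1 - σ i A j)))
        = (1 / (N : ℝ)) *
          ((∑ j : ZMod N, (φa ((j.val : ℝ) / N) * A j + φb ((j.val : ℝ) / N) * (1 - A j)))
            + (A i - A (i + 1)) * dψ i) := by
      rw [← hdiff]; ring
    rw [this]
    field_simp
  rw [Finset.mul_sum]
  refine Finset.sum_congr rfl fun i _ => ?_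
  rw [key i, hB i, hB (i + 1), hltab i, hltba i]
  rcases hA i with h1 | h1 <;> rcases hA (i + 1) with h2 | h2 <;> rw [h1, h2]
  · ring
  · have : (0 - 1 : ℝ) * dψ i / N = -dψ i / N := by ring
    rw [this]
    field_simp
    ring
  · have : (1 - 0 : ℝ) * dψ i / N = dψ i / N := by ring
    rw [this]
    field_simp
    ring
  · ring
end
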